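/- Let (Xₙ)_{n ≥ 1} be a second-order (weakly) stationary sequence of real-valued square-integrable random variables such that Var(X₁) + 2·Σ_{j=2}^∞ |Cov(X₁, X_j)| < ∞. Then, with Sₙ = X₁ + ⋯ + Xₙ, one has Var(Sₙ/√n) → σ² := Var(X₁) + 2·Σ_{j=2}^∞ Cov(X₁, X_j) as n → ∞. -/

import Mathlib

open MeasureTheory ProbabilityTheory Filter

/-- Covariance `E(XY) - E(X)E(Y)` of real random variables. -/
noncomputable def cov {Ω : Type*} [MeasurableSpace Ω] (μ : Measure Ω) (X Y : Ω → ℝ) : ℝ :=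
  (∫ ω, X ω * Y ω ∂μ) - (∫ ω, X ω ∂μ) * (∫ ω, Y ω ∂μ)

section Aux

variable {Ω : Type*} [MeasurableSpace Ω] (μ : Measure Ω) [IsProbabilityMeasure μ]

lemma integrable_mul₂ {f g : Ω → ℝ} (hf : MemLp f 2 μ) (hg : MemLp g 2 μ) :
    Integrable (fun ω => f ω * g ω) μ := by
  have h : MemLp (f • g) 1 μ := by
    haveI : ENNReal.HolderTriple 2 2 1 := ⟨by simp [ENNReal.inv_two_add_inv_two]⟩
    exact hg.smul hf
  rw [← memLp_one_iff_integrable]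
  exact h

lemma variance_eq_cov {f : Ω → ℝ} (hf : MemLp f 2 μ) : variance f μ = cov μ f f := by
  have h : μ[f ^ 2] = ∫ ω, f ω * f ω ∂μ := by
    simp [pow_two]
  rw [variance_eq_sub hf, h, cov, sq]

lemma cov_sum_sum (X : ℕ → Ω → ℝ) (hX2 : ∀ n, MemLp (X n) 2 μ) (n : ℕ) :
    cov μ (fun ω => ∑ i ∈ Finset.range n, X i ω) (fun ω => ∑ j ∈ Finset.range n, X j ω)
      = ∑ i ∈ Finset.range n, ∑ j ∈ Finset.range n, cov μ (X i) (X j) := by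
  have hint : ∀ i j : ℕ, Integrable (fun ω => X i ω * X j ω) μ :=
    fun i j => integrable_mul₂ μ (hX2 i) (hX2 j)
  have h1 : (∫ ω, (∑ i ∈ Finset.range n, X i ω) * (∑ j ∈ Finset.range n, X j ω) ∂μ)
      = ∑ i ∈ Finset.range n, ∑ j ∈ Finset.range n, ∫ ω, X i ω * X j ω ∂μ := by
    have heq : ∀ ω, (∑ i ∈ Finset.range n, X i ω) * (∑ j ∈ Finset.range n, X j ω)
        = ∑ i ∈ Finset.range n, ∑ j ∈ Finset.range n, X i ω * X j ω := fun ω =>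
      Finset.sum_mul_sum _ _ _ _
    rw [integral_congr_ae (Eventually.of_forall heq),
      integral_finset_sum _ fun i _ => integrable_finset_sum _ fun j _ => hint i j]
    exact Finset.sum_congr rfl fun i _ => integral_finset_sum _ fun j _ => hint i j
  have h2 : (∫ ω, (∑ i ∈ Finset.range n, X i ω) ∂μ) = ∑ i ∈ Finset.range n, ∫ ω, X i ω ∂μ :=
    integral_finset_sum _ fun i _ => ((hX2 i).integrable one_le_two)
  rw [cov, h1, h2, Finset.sum_mul_sum]
  rw [← Finset.sum_sub_distrib]
  exact Finset.sum_congr rfl fun i _ => by rw [← Finset.sum_sub_distrib]; rfl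

lemma double_sum_ident (c : ℕ → ℝ) (d : ℕ → ℕ → ℝ) (hsymm : ∀ i j, d i j = d j i)
    (hs : ∀ i j, i ≤ j → d i j = c (j - i)) (n : ℕ) :
    ∑ i ∈ Finset.range n, ∑ j ∈ Finset.range n, d i j
      = n * c 0 + 2 * ∑ k ∈ Finset.range n, ((n : ℝ) - (k + 1)) * c (k + 1) := by
  induction n with
  | zero => simp
  | succ n ih =>
    have hrow : ∑ i ∈ Finset.range n, d i n = ∑ k ∈ Finset.range n, c (k + 1) := by
      have h1 : ∑ i ∈ Finset.range n, d i n = ∑ i ∈ Finset.range n, c (n - i) :=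
        Finset.sum_congr rfl fun i hi => hs i n (le_of_lt (Finset.mem_range.mp hi))
      rw [h1, ← Finset.sum_range_reflect (fun k => c (k + 1)) n]
      exact Finset.sum_congr rfl fun i hi => by
        have := Finset.mem_range.mp hi; congr 1; omega
    have hcol : ∑ j ∈ Finset.range n, d n j = ∑ k ∈ Finset.range n, c (k + 1) := by
      rw [← hrow]; exact Finset.sum_congr rfl fun j _ => hsymm n j
    have expand : ∑ i ∈ Finset.range (n + 1), ∑ j ∈ Finset.range (n + 1), d i j
        = (∑ i ∈ Finset.range n, ∑ j ∈ Finset.range n, d i j)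
          + (∑ i ∈ Finset.range n, d i n) + (∑ j ∈ Finset.range n, d n j) + d n n := by
      rw [Finset.sum_range_succ]
      simp_rw [Finset.sum_range_succ]
      rw [Finset.sum_add_distrib]
      ring
    rw [expand, ih, hrow, hcol, hs n n le_rfl, Nat.sub_self]
    have hsum2 : ∑ k ∈ Finset.range (n + 1), (((n + 1 : ℕ) : ℝ) - ((k : ℝ) + 1)) * c (k + 1)
        = ∑ k ∈ Finset.range n, ((((n : ℝ)) - ((k : ℝ) + 1)) * c (k + 1) + c (k + 1)) := by
      rw [Finset.sum_range_succ]
      push_cast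
      rw [show ((n : ℝ) + 1 - ((n : ℝ) + 1)) * c (n + 1) = 0 by ring, add_zero]
      exact Finset.sum_congr rfl fun k _ => by ring
    rw [hsum2, Finset.sum_add_distrib]
    push_cast
    ring

end Aux

/-- For a second-order stationary sequence `(Xₙ)ₙ≥₁` (here indexed from `0`, so `X i`
stands for `X_{i+1}`) with `Var(X₁) + 2 ∑_{j≥2} |Cov(X₁, X_j)| < ∞`, one has
`Var(Sₙ/√n) → σ² = Var(X₁) + 2 ∑_{j≥2} Cov(X₁, X_j)`. -/
theorem variance_partial_sums_tendsto_of_second_order_stationary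
    {Ω : Type*} [MeasurableSpace Ω] (μ : Measure Ω) [IsProbabilityMeasure μ]
    (X : ℕ → Ω → ℝ) (hX : ∀ n, Measurable (X n)) (hX2 : ∀ n, MemLp (X n) 2 μ)
    (hmean : ∀ n, ∫ ω, X n ω ∂μ = ∫ ω, X 0 ω ∂μ)
    (hstat : ∀ i j : ℕ, i ≤ j → cov μ (X i) (X j) = cov μ (X 0) (X (j - i)))
    (hsum : Summable (fun j : ℕ => |cov μ (X 0) (X (j + 1))|)) :
    Tendsto
      (fun n : ℕ =>
        variance (fun ω => (∑ i ∈ Finset.range n, X i ω) / Real.sqrt n) μ)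
      atTop
      (nhds (variance (X 0) μ + 2 * ∑' j : ℕ, cov μ (X 0) (X (j + 1)))) := by
  set c : ℕ → ℝ := fun k => cov μ (X 0) (X k) with hc
  set f : ℕ → ℕ → ℝ := fun n k => if k < n then (1 - ((k : ℝ) + 1) / n) * c (k + 1) else 0
    with hfdef
  have hsymm : ∀ i j, cov μ (X i) (X j) = cov μ (X j) (X i) := by
    intro i j
    unfold cov
    rw [mul_comm (∫ ω, X i ω ∂μ)]
    congr 1
    exact integral_congr_ae (Eventually.of_forall fun ω => mul_comm _ _)
  have key : ∀ n : ℕ, ∑ i ∈ Finset.range n, ∑ j ∈ Finset.range n, cov μ (X i) (X j)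
      = n * c 0 + 2 * ∑ k ∈ Finset.range n, ((n : ℝ) - (k + 1)) * c (k + 1) :=
    double_sum_ident c _ hsymm (fun i j h => hstat i j h)
  have hV : ∀ n : ℕ, 1 ≤ n →
      variance (fun ω => (∑ i ∈ Finset.range n, X i ω) / Real.sqrt n) μ
        = c 0 + 2 * ∑' k, f n k := by
    intro n hn
    have hn0 : (n : ℝ) ≠ 0 := Nat.cast_ne_zero.mpr (by omega)
    have hS : MemLp (fun ω => ∑ i ∈ Finset.range n, X i ω) 2 μ :=
      memLp_finset_sum _ fun i _ => hX2 i
    have h1 : (fun ω => (∑ i ∈ Finset.range n, X i ω) / Real.sqrt n)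
        = fun ω => (Real.sqrt n)⁻¹ * (∑ i ∈ Finset.range n, X i ω) := by
      funext ω; rw [div_eq_inv_mul]
    rw [h1, variance_const_mul]
    have hsq : ((Real.sqrt n)⁻¹) ^ 2 = (n : ℝ)⁻¹ := by
      rw [inv_pow, Real.sq_sqrt (Nat.cast_nonneg n)]
    rw [hsq, variance_eq_cov μ hS, cov_sum_sum μ X hX2 n, key n]
    have htsum : ∑' k, f n k = ∑ k ∈ Finset.range n, (1 - ((k : ℝ) + 1) / n) * c (k + 1) := by
      rw [tsum_eq_sum (s := Finset.range n)
        (fun k hk => if_neg (by simpa using hk))]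
      exact Finset.sum_congr rfl fun k hk => if_pos (Finset.mem_range.mp hk)
    have hterm : ∀ k ∈ Finset.range n, (1 - ((k : ℝ) + 1) / n) * c (k + 1)
        = (n : ℝ)⁻¹ * (((n : ℝ) - ((k : ℝ) + 1)) * c (k + 1)) := fun k _ => by
      field_simp
    rw [htsum, Finset.sum_congr rfl hterm, ← Finset.mul_sum]
    field_simp
  have hvar0 : variance (X 0) μ = c 0 := variance_eq_cov μ (hX2 0)
  rw [hvar0]
  have hlim : Tendsto (fun n => c 0 + 2 * ∑' k, f n k) atTop
      (nhds (c 0 + 2 * ∑' j : ℕ, c (j + 1))) := by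
    refine tendsto_const_nhds.add (Tendsto.const_mul 2 ?_)
    refine tendsto_tsum_of_dominated_convergence hsum ?_ ?_
    · intro k
      have hd : Tendsto (fun n : ℕ => ((k : ℝ) + 1) / n) atTop (nhds 0) :=
        tendsto_const_div_atTop_nhds_zero_nat _
      have h2 : Tendsto (fun n : ℕ => 1 - ((k : ℝ) + 1) / n) atTop (nhds 1) := by
        simpa using tendsto_const_nhds.sub hd
      have h1 : Tendsto (fun n : ℕ => (1 - ((k : ℝ) + 1) / n) * c (k + 1)) atTop
          (nhds (c (k + 1))) := by
        simpa using h2.mul_const (c (k + 1))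
      refine h1.congr' ?_
      filter_upwards [eventually_gt_atTop k] with n hn
      simp [hfdef, hn]
    · filter_upwards [eventually_ge_atTop 1] with n hn k
      by_cases hk : k < n
      · have hnpos : (0 : ℝ) < n := by exact_mod_cast (by omega : 0 < n)
        have h0 : (0 : ℝ) ≤ ((k : ℝ) + 1) / n := by positivity
        have h1 : ((k : ℝ) + 1) / n ≤ 1 := by
          rw [div_le_one hnpos]
          exact_mod_cast (by omega : k + 1 ≤ n)
        simp only [hfdef, if_pos hk]
        calc ‖(1 - ((k : ℝ) + 1) / n) * c (k + 1)‖
            = |1 - ((k : ℝ) + 1) / n| * |c (k + 1)| := abs_mul _ _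
          _ ≤ 1 * |c (k + 1)| := by
              apply mul_le_mul_of_nonneg_right _ (abs_nonneg _)
              rw [abs_le]; constructor <;> linarith
          _ = |c (k + 1)| := one_mul _
      · simp only [hfdef, if_neg hk, norm_zero]
        exact abs_nonneg _
  refine Tendsto.congr' ?_ hlim
  filter_upwards [eventually_ge_atTop 1] with n hn
  exact (hV n hn).symm
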